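/- Assume φ3 and φ4 are four times continuously differentiable on [1/2,1] and satisfy condition (2). For t, s ∈ [1/2,1] let D(t,s) denote the determinant of the 4×4 matrix whose rows are (1, 2t, φ3'(t), φ4'(t)), (1, 2s, φ3'(s), φ4'(s)), (0, 2, φ3''(t), φ4''(t)) and (0, 2, φ3''(s), φ4''(s)). Then there exist constants c > 0 and C > 0, depending only on A2 and A3, such that c·(t−s)⁴ ≤ |D(t,s)| ≤ C·(t−s)⁴ for all t, s ∈ [1/2,1]. -/

import Mathlib

open MeasureTheory Set

/-- The `n`-th derivative of `φ` on the interval `[1/2,1]`. -/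
noncomputable def iDW (n : ℕ) (φ : ℝ → ℝ) (t : ℝ) : ℝ :=
  iteratedDerivWithin n φ (Icc (1/2 : ℝ) 1) t

/-- Condition (2): `A2 ≤ |φ₃'''(t)·φ₄''''(s) − φ₃''''(t)·φ₄'''(s)| ≤ A3` on `[1/2,1]²`. -/
def Cond2 (A2 A3 : ℝ) (φ3 φ4 : ℝ → ℝ) : Prop :=
  ∀ t ∈ Icc (1/2 : ℝ) 1, ∀ s ∈ Icc (1/2 : ℝ) 1,
    A2 ≤ |iDW 3 φ3 t * iDW 4 φ4 s - iDW 4 φ3 t * iDW 3 φ4 s| ∧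
      |iDW 3 φ3 t * iDW 4 φ4 s - iDW 4 φ3 t * iDW 3 φ4 s| ≤ A3

/-- The determinant `D(t,s)` of Lemma 18. -/
noncomputable def Dmat (φ3 φ4 : ℝ → ℝ) (t s : ℝ) : ℝ :=
  Matrix.det
    !![(1 : ℝ), 2 * t, iDW 1 φ3 t, iDW 1 φ4 t;
       (1 : ℝ), 2 * s, iDW 1 φ3 s, iDW 1 φ4 s;
       (0 : ℝ), 2, iDW 2 φ3 t, iDW 2 φ4 t;
       (0 : ℝ), 2, iDW 2 φ3 s, iDW 2 φ4 s]

theorem detfour (a b c d e f g h i j k l m n o p : ℝ) :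
    Matrix.det !![a,b,c,d; e,f,g,h; i,j,k,l; m,n,o,p] =
      a*(f*(k*p-l*o) - g*(j*p-l*n) + h*(j*o-k*n))
      - b*(e*(k*p-l*o) - g*(i*p-l*m) + h*(i*o-k*m))
      + c*(e*(j*p-l*n) - f*(i*p-l*m) + h*(i*n-j*m))
      - d*(e*(j*o-k*n) - f*(i*o-k*m) + g*(i*n-j*m)) := by
  have e1 : Fin.succAbove (2 : Fin 4) (2 : Fin 3) = (3 : Fin 4) := by decide
  have e2 : Fin.succAbove (1 : Fin 4) (2 : Fin 3) = (3 : Fin 4) := by decide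
  have e3 : Fin.castSucc (2 : Fin 3) = (2 : Fin 4) := by decide
  have e4 : Fin.succAbove (3 : Fin 4) (2 : Fin 3) = (2 : Fin 4) := by decide
  simp [Matrix.det_succ_row_zero, Fin.sum_univ_succ, e1, e2, e3, e4]
  ring

-- derivative of iDW at interior points
lemma iDW_hasDerivAt {φ : ℝ → ℝ} (hφ : ContDiffOn ℝ 4 φ (Icc (1/2 : ℝ) 1))
    {n : ℕ} (hn : n < 4) {x : ℝ} (hx : x ∈ Ioo (1/2 : ℝ) 1) :
    HasDerivAt (iDW n φ) (iDW (n + 1) φ x) x := by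
  have hu : UniqueDiffOn ℝ (Icc (1/2 : ℝ) 1) := uniqueDiffOn_Icc (by norm_num)
  have hxI : x ∈ Icc (1/2 : ℝ) 1 := Ioo_subset_Icc_self hx
  have hd : DifferentiableOn ℝ (iteratedDerivWithin n φ (Icc (1/2 : ℝ) 1)) (Icc (1/2 : ℝ) 1) :=
    hφ.differentiableOn_iteratedDerivWithin (by exact_mod_cast hn) hu
  have h1 : HasDerivWithinAt (iDW n φ)
      (derivWithin (iteratedDerivWithin n φ (Icc (1/2 : ℝ) 1)) (Icc (1/2 : ℝ) 1) x)
      (Icc (1/2 : ℝ) 1) x := (hd x hxI).hasDerivWithinAt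
  rw [show derivWithin (iteratedDerivWithin n φ (Icc (1/2 : ℝ) 1)) (Icc (1/2 : ℝ) 1) x
      = iDW (n+1) φ x from (congrFun iteratedDerivWithin_succ x).symm] at h1
  exact h1.hasDerivAt (Icc_mem_nhds hx.1 hx.2)

lemma iDW_continuousOn {φ : ℝ → ℝ} (hφ : ContDiffOn ℝ 4 φ (Icc (1/2 : ℝ) 1))
    {n : ℕ} (hn : n ≤ 4) : ContinuousOn (iDW n φ) (Icc (1/2 : ℝ) 1) :=
  hφ.continuousOn_iteratedDerivWithin (by exact_mod_cast hn) (uniqueDiffOn_Icc (by norm_num))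

-- the sandwich helper
lemma deriv_le_deriv_sandwich {f g f' g' : ℝ → ℝ} {x0 x1 : ℝ} (h01 : x0 ≤ x1)
    (hfc : ContinuousOn f (Icc x0 x1)) (hgc : ContinuousOn g (Icc x0 x1))
    (hf : ∀ x ∈ Ioo x0 x1, HasDerivAt f (f' x) x)
    (hg : ∀ x ∈ Ioo x0 x1, HasDerivAt g (g' x) x)
    (hle : ∀ x ∈ Ioo x0 x1, f' x ≤ g' x) :
    f x1 - f x0 ≤ g x1 - g x0 := by
  have hmono : MonotoneOn (fun x => g x - f x) (Icc x0 x1) := by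
    apply monotoneOn_of_deriv_nonneg (convex_Icc x0 x1) (hgc.sub hfc)
    · intro x hx
      rw [interior_Icc] at hx
      exact ((hg x hx).sub (hf x hx)).differentiableAt.differentiableWithinAt
    · intro x hx
      rw [interior_Icc] at hx
      rw [((hg x hx).sub (hf x hx)).deriv]
      linarith [hle x hx]
  have := hmono (left_mem_Icc.2 h01) (right_mem_Icc.2 h01) h01
  simp only at this
  linarith

section chain

variable {A2 A3 : ℝ} {φ3 φ4 : ℝ → ℝ}

/-- Lemma B : bound on `Q(a,b) = φ3'''(a)φ4'''(b) − φ3'''(b)φ4'''(a)`. -/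
lemma lemB (h3 : ContDiffOn ℝ 4 φ3 (Icc (1/2 : ℝ) 1)) (h4 : ContDiffOn ℝ 4 φ4 (Icc (1/2 : ℝ) 1))
    (hK : ∀ x ∈ Icc (1/2 : ℝ) 1, ∀ y ∈ Icc (1/2 : ℝ) 1,
      A2 ≤ iDW 3 φ3 x * iDW 4 φ4 y - iDW 4 φ3 x * iDW 3 φ4 y ∧
        iDW 3 φ3 x * iDW 4 φ4 y - iDW 4 φ3 x * iDW 3 φ4 y ≤ A3)
    {a b : ℝ} (ha : a ∈ Icc (1/2 : ℝ) 1) (hb : b ∈ Icc (1/2 : ℝ) 1) (hab : a ≤ b) :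
    A2 * (b - a) ≤ iDW 3 φ3 a * iDW 3 φ4 b - iDW 3 φ3 b * iDW 3 φ4 a ∧
      iDW 3 φ3 a * iDW 3 φ4 b - iDW 3 φ3 b * iDW 3 φ4 a ≤ A3 * (b - a) := by
  obtain ⟨ha1, ha2⟩ := ha
  obtain ⟨hb1, hb2⟩ := hb
  set g : ℝ → ℝ := fun ρ =>
    iDW 3 φ3 ((a+b)/2 - ρ) * iDW 3 φ4 ((a+b)/2 + ρ)
      - iDW 3 φ3 ((a+b)/2 + ρ) * iDW 3 φ4 ((a+b)/2 - ρ) with hgdef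
  have h0r : (0:ℝ) ≤ (b-a)/2 := by linarith
  -- continuity of g on [0, (b-a)/2]
  have hmapsub : ∀ x ∈ Icc (0:ℝ) ((b-a)/2), (a+b)/2 - x ∈ Icc (1/2:ℝ) 1 := by
    intro x hx; constructor <;> [nlinarith [hx.1, hx.2]; nlinarith [hx.1, hx.2]]
  have hmapadd : ∀ x ∈ Icc (0:ℝ) ((b-a)/2), (a+b)/2 + x ∈ Icc (1/2:ℝ) 1 := by
    intro x hx; constructor <;> [nlinarith [hx.1, hx.2]; nlinarith [hx.1, hx.2]]
  have csub : ∀ ψ : ℝ → ℝ, ContDiffOn ℝ 4 ψ (Icc (1/2 : ℝ) 1) →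
      ContinuousOn (fun ρ => iDW 3 ψ ((a+b)/2 - ρ)) (Icc (0:ℝ) ((b-a)/2)) := by
    intro ψ hψ
    exact (iDW_continuousOn hψ (by norm_num)).comp
      ((continuous_const.sub continuous_id).continuousOn) hmapsub
  have cadd : ∀ ψ : ℝ → ℝ, ContDiffOn ℝ 4 ψ (Icc (1/2 : ℝ) 1) →
      ContinuousOn (fun ρ => iDW 3 ψ ((a+b)/2 + ρ)) (Icc (0:ℝ) ((b-a)/2)) := by
    intro ψ hψ
    exact (iDW_continuousOn hψ (by norm_num)).comp
      ((continuous_const.add continuous_id).continuousOn) hmapadd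
  have hgc : ContinuousOn g (Icc (0:ℝ) ((b-a)/2)) :=
    ((csub φ3 h3).mul (cadd φ4 h4)).sub ((cadd φ3 h3).mul (csub φ4 h4))
  -- derivative of g at interior points
  have hgd : ∀ ρ ∈ Ioo (0:ℝ) ((b-a)/2),
      HasDerivAt g
        ((iDW 3 φ3 ((a+b)/2 - ρ) * iDW 4 φ4 ((a+b)/2 + ρ)
            - iDW 4 φ3 ((a+b)/2 - ρ) * iDW 3 φ4 ((a+b)/2 + ρ))
          + (iDW 3 φ3 ((a+b)/2 + ρ) * iDW 4 φ4 ((a+b)/2 - ρ)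
            - iDW 4 φ3 ((a+b)/2 + ρ) * iDW 3 φ4 ((a+b)/2 - ρ))) ρ := by
    intro ρ hρ
    have hσ : (a+b)/2 - ρ ∈ Ioo (1/2:ℝ) 1 := by
      constructor <;> nlinarith [hρ.1, hρ.2]
    have hτ : (a+b)/2 + ρ ∈ Ioo (1/2:ℝ) 1 := by
      constructor <;> nlinarith [hρ.1, hρ.2]
    have hsub : HasDerivAt (fun x : ℝ => (a+b)/2 - x) (-1) ρ := by
      simpa using (hasDerivAt_id ρ).const_sub ((a+b)/2)
    have hadd : HasDerivAt (fun x : ℝ => (a+b)/2 + x) 1 ρ := by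
      simpa using (hasDerivAt_id ρ).const_add ((a+b)/2)
    have d1 : HasDerivAt (fun x => iDW 3 φ3 ((a+b)/2 - x)) (iDW 4 φ3 ((a+b)/2 - ρ) * (-1)) ρ :=
      (iDW_hasDerivAt h3 (by norm_num) hσ).comp ρ hsub
    have d2 : HasDerivAt (fun x => iDW 3 φ4 ((a+b)/2 - x)) (iDW 4 φ4 ((a+b)/2 - ρ) * (-1)) ρ :=
      (iDW_hasDerivAt h4 (by norm_num) hσ).comp ρ hsub
    have d3 : HasDerivAt (fun x => iDW 3 φ3 ((a+b)/2 + x)) (iDW 4 φ3 ((a+b)/2 + ρ) * 1) ρ :=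
      (iDW_hasDerivAt h3 (by norm_num) hτ).comp ρ hadd
    have d4 : HasDerivAt (fun x => iDW 3 φ4 ((a+b)/2 + x)) (iDW 4 φ4 ((a+b)/2 + ρ) * 1) ρ :=
      (iDW_hasDerivAt h4 (by norm_num) hτ).comp ρ hadd
    have := (d1.mul d4).sub (d3.mul d2)
    refine this.congr_deriv ?_
    ring
  constructor
  · -- lower bound : compare with ρ ↦ 2*A2*ρ
    have := deriv_le_deriv_sandwich h0r
      (f := fun ρ => 2*A2*ρ) (g := g) (f' := fun _ => 2*A2)
      (g' := fun ρ => (iDW 3 φ3 ((a+b)/2 - ρ) * iDW 4 φ4 ((a+b)/2 + ρ)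
            - iDW 4 φ3 ((a+b)/2 - ρ) * iDW 3 φ4 ((a+b)/2 + ρ))
          + (iDW 3 φ3 ((a+b)/2 + ρ) * iDW 4 φ4 ((a+b)/2 - ρ)
            - iDW 4 φ3 ((a+b)/2 + ρ) * iDW 3 φ4 ((a+b)/2 - ρ)))
      ((continuous_const.mul continuous_id).continuousOn) hgc
      (fun x _ => by simpa using (hasDerivAt_id x).const_mul (2*A2)) hgd
      (fun x hx => by
        have hσ : (a+b)/2 - x ∈ Icc (1/2:ℝ) 1 :=
          hmapsub x (Ioo_subset_Icc_self hx)
        have hτ : (a+b)/2 + x ∈ Icc (1/2:ℝ) 1 :=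
          hmapadd x (Ioo_subset_Icc_self hx)
        have k1 := (hK _ hσ _ hτ).1
        have k2 := (hK _ hτ _ hσ).1
        linarith)
    have hg0 : g 0 = 0 := by simp [hgdef]
    have hgr : g ((b-a)/2) =
        iDW 3 φ3 a * iDW 3 φ4 b - iDW 3 φ3 b * iDW 3 φ4 a := by
      rw [hgdef]
      simp only [show (a+b)/2 - (b-a)/2 = a from by ring, show (a+b)/2 + (b-a)/2 = b from by ring]
    rw [hg0, hgr] at this
    linarith
  · -- upper bound : compare with ρ ↦ 2*A3*ρ
    have := deriv_le_deriv_sandwich h0r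
      (f := g) (g := fun ρ => 2*A3*ρ)
      (f' := fun ρ => (iDW 3 φ3 ((a+b)/2 - ρ) * iDW 4 φ4 ((a+b)/2 + ρ)
            - iDW 4 φ3 ((a+b)/2 - ρ) * iDW 3 φ4 ((a+b)/2 + ρ))
          + (iDW 3 φ3 ((a+b)/2 + ρ) * iDW 4 φ4 ((a+b)/2 - ρ)
            - iDW 4 φ3 ((a+b)/2 + ρ) * iDW 3 φ4 ((a+b)/2 - ρ)))
      (g' := fun _ => 2*A3)
      hgc ((continuous_const.mul continuous_id).continuousOn)
      hgd (fun x _ => by simpa using (hasDerivAt_id x).const_mul (2*A3))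
      (fun x hx => by
        have hσ : (a+b)/2 - x ∈ Icc (1/2:ℝ) 1 :=
          hmapsub x (Ioo_subset_Icc_self hx)
        have hτ : (a+b)/2 + x ∈ Icc (1/2:ℝ) 1 :=
          hmapadd x (Ioo_subset_Icc_self hx)
        have k1 := (hK _ hσ _ hτ).2
        have k2 := (hK _ hτ _ hσ).2
        linarith)
    have hg0 : g 0 = 0 := by simp [hgdef]
    have hgr : g ((b-a)/2) =
        iDW 3 φ3 a * iDW 3 φ4 b - iDW 3 φ3 b * iDW 3 φ4 a := by
      rw [hgdef]
      simp only [show (a+b)/2 - (b-a)/2 = a from by ring, show (a+b)/2 + (b-a)/2 = b from by ring]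
    rw [hg0, hgr] at this
    linarith

/-- Lemma C1. -/
lemma lemC1 (h3 : ContDiffOn ℝ 4 φ3 (Icc (1/2 : ℝ) 1)) (h4 : ContDiffOn ℝ 4 φ4 (Icc (1/2 : ℝ) 1))
    (hK : ∀ x ∈ Icc (1/2 : ℝ) 1, ∀ y ∈ Icc (1/2 : ℝ) 1,
      A2 ≤ iDW 3 φ3 x * iDW 4 φ4 y - iDW 4 φ3 x * iDW 3 φ4 y ∧
        iDW 3 φ3 x * iDW 4 φ4 y - iDW 4 φ3 x * iDW 3 φ4 y ≤ A3)
    {u a x : ℝ} (hu : u ∈ Icc (1/2 : ℝ) 1) (haI : a ∈ Icc (1/2 : ℝ) 1)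
    (hx : x ∈ Icc (1/2 : ℝ) 1) (hxu : x ≤ u) (hua : u ≤ a) :
    A2 * ((a-x)^2 - (a-u)^2) / 2 ≤
        iDW 3 φ3 a * (iDW 2 φ4 x - iDW 2 φ4 u) - iDW 3 φ4 a * (iDW 2 φ3 x - iDW 2 φ3 u) ∧
      iDW 3 φ3 a * (iDW 2 φ4 x - iDW 2 φ4 u) - iDW 3 φ4 a * (iDW 2 φ3 x - iDW 2 φ3 u) ≤
        A3 * ((a-x)^2 - (a-u)^2) / 2 := by
  have hIsub : Icc x u ⊆ Icc (1/2 : ℝ) 1 := Icc_subset_Icc hx.1 hu.2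
  set ψf : ℝ → ℝ := fun w =>
    iDW 3 φ3 a * (iDW 2 φ4 w - iDW 2 φ4 u) - iDW 3 φ4 a * (iDW 2 φ3 w - iDW 2 φ3 u) with hψdef
  have hψc : ContinuousOn ψf (Icc x u) := by
    apply ContinuousOn.sub
    · exact continuousOn_const.mul
        (((iDW_continuousOn h4 (n := 2) (by norm_num)).mono hIsub).sub continuousOn_const)
    · exact continuousOn_const.mul
        (((iDW_continuousOn h3 (n := 2) (by norm_num)).mono hIsub).sub continuousOn_const)
  have hψd : ∀ w ∈ Ioo x u,
      HasDerivAt ψf (-(iDW 3 φ3 w * iDW 3 φ4 a - iDW 3 φ3 a * iDW 3 φ4 w)) w := by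
    intro w hw
    have hwI : w ∈ Ioo (1/2 : ℝ) 1 := ⟨lt_of_le_of_lt hx.1 hw.1, lt_of_lt_of_le hw.2 hu.2⟩
    have hder : HasDerivAt (fun w => iDW 3 φ3 a * (iDW 2 φ4 w - iDW 2 φ4 u)
        - iDW 3 φ4 a * (iDW 2 φ3 w - iDW 2 φ3 u))
        (iDW 3 φ3 a * iDW 3 φ4 w - iDW 3 φ4 a * iDW 3 φ3 w) w :=
      (HasDerivAt.const_mul (iDW 3 φ3 a)
        ((iDW_hasDerivAt h4 (n := 2) (by norm_num) hwI).sub_const (iDW 2 φ4 u))).sub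
      (HasDerivAt.const_mul (iDW 3 φ4 a)
        ((iDW_hasDerivAt h3 (n := 2) (by norm_num) hwI).sub_const (iDW 2 φ3 u)))
    convert hder using 1
    ring
  have hψu : ψf u = 0 := by simp [hψdef]
  have hψval : ∀ w ∈ Ioo x u,
      A2 * (a - w) ≤ iDW 3 φ3 w * iDW 3 φ4 a - iDW 3 φ3 a * iDW 3 φ4 w ∧
        iDW 3 φ3 w * iDW 3 φ4 a - iDW 3 φ3 a * iDW 3 φ4 w ≤ A3 * (a - w) := by
    intro w hw
    have hwI : w ∈ Icc (1/2 : ℝ) 1 := hIsub (Ioo_subset_Icc_self hw)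
    exact lemB h3 h4 hK hwI haI (le_trans (le_of_lt hw.2) hua)
  have hpolyd : ∀ c : ℝ, ∀ w : ℝ, HasDerivAt (fun w => c * (a - w)^2 / 2) (-(c * (a - w))) w := by
    intro c w
    have h1 : HasDerivAt (fun w : ℝ => (a - w)^2) (2 * (a - w)^1 * (-1)) w :=
      (HasDerivAt.pow ((hasDerivAt_id' w).const_sub a) 2).congr_deriv (by norm_num)
    have := (HasDerivAt.const_mul c h1).div_const 2
    refine this.congr_deriv ?_
    ring
  have hpolyc : ∀ c : ℝ, ContinuousOn (fun w : ℝ => c * (a - w)^2 / 2) (Icc x u) := by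
    intro c
    apply Continuous.continuousOn
    continuity
  constructor
  · have := deriv_le_deriv_sandwich hxu (f := ψf) (g := fun w => A2 * (a - w)^2 / 2)
      (f' := fun w => -(iDW 3 φ3 w * iDW 3 φ4 a - iDW 3 φ3 a * iDW 3 φ4 w))
      (g' := fun w => -(A2 * (a - w)))
      hψc (hpolyc A2) hψd (fun w _ => hpolyd A2 w)
      (fun w hw => by
        have h := (hψval w hw).1
        show -(iDW 3 φ3 w * iDW 3 φ4 a - iDW 3 φ3 a * iDW 3 φ4 w) ≤ -(A2 * (a - w))
        linarith [h])
    rw [hψu] at this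
    simp only [hψdef] at this
    nlinarith [this]
  · have := deriv_le_deriv_sandwich hxu (f := fun w => A3 * (a - w)^2 / 2) (g := ψf)
      (f' := fun w => -(A3 * (a - w)))
      (g' := fun w => -(iDW 3 φ3 w * iDW 3 φ4 a - iDW 3 φ3 a * iDW 3 φ4 w))
      (hpolyc A3) hψc (fun w _ => hpolyd A3 w) hψd
      (fun w hw => by
        have h := (hψval w hw).2
        show -(A3 * (a - w)) ≤ -(iDW 3 φ3 w * iDW 3 φ4 a - iDW 3 φ3 a * iDW 3 φ4 w)
        linarith [h])
    rw [hψu] at this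
    simp only [hψdef] at this
    nlinarith [this]

/-- Lemma C2. -/
lemma lemC2 (h3 : ContDiffOn ℝ 4 φ3 (Icc (1/2 : ℝ) 1)) (h4 : ContDiffOn ℝ 4 φ4 (Icc (1/2 : ℝ) 1))
    (hK : ∀ x ∈ Icc (1/2 : ℝ) 1, ∀ y ∈ Icc (1/2 : ℝ) 1,
      A2 ≤ iDW 3 φ3 x * iDW 4 φ4 y - iDW 4 φ3 x * iDW 3 φ4 y ∧
        iDW 3 φ3 x * iDW 4 φ4 y - iDW 4 φ3 x * iDW 3 φ4 y ≤ A3)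
    {u x y : ℝ} (hu : u ∈ Icc (1/2 : ℝ) 1) (hx : x ∈ Icc (1/2 : ℝ) 1)
    (hy : y ∈ Icc (1/2 : ℝ) 1) (hxu : x ≤ u) (huy : u ≤ y) :
    A2 * ((y-x)^3 - (y-u)^3 - (u-x)^3) / 6 ≤
        (iDW 2 φ3 y - iDW 2 φ3 u) * (iDW 2 φ4 x - iDW 2 φ4 u)
          - (iDW 2 φ4 y - iDW 2 φ4 u) * (iDW 2 φ3 x - iDW 2 φ3 u) ∧
      (iDW 2 φ3 y - iDW 2 φ3 u) * (iDW 2 φ4 x - iDW 2 φ4 u)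
          - (iDW 2 φ4 y - iDW 2 φ4 u) * (iDW 2 φ3 x - iDW 2 φ3 u) ≤
        A3 * ((y-x)^3 - (y-u)^3 - (u-x)^3) / 6 := by
  have hIsub : Icc u y ⊆ Icc (1/2 : ℝ) 1 := Icc_subset_Icc hu.1 hy.2
  set Φf : ℝ → ℝ := fun w =>
    (iDW 2 φ3 w - iDW 2 φ3 u) * (iDW 2 φ4 x - iDW 2 φ4 u)
      - (iDW 2 φ4 w - iDW 2 φ4 u) * (iDW 2 φ3 x - iDW 2 φ3 u) with hΦdef
  have hΦc : ContinuousOn Φf (Icc u y) := by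
    apply ContinuousOn.sub
    · exact (((iDW_continuousOn h3 (by norm_num)).mono hIsub).sub continuousOn_const).mul
        continuousOn_const
    · exact (((iDW_continuousOn h4 (by norm_num)).mono hIsub).sub continuousOn_const).mul
        continuousOn_const
  have hΦd : ∀ w ∈ Ioo u y,
      HasDerivAt Φf
        (iDW 3 φ3 w * (iDW 2 φ4 x - iDW 2 φ4 u) - iDW 3 φ4 w * (iDW 2 φ3 x - iDW 2 φ3 u)) w := by
    intro w hw
    have hwI : w ∈ Ioo (1/2 : ℝ) 1 := ⟨lt_of_le_of_lt hu.1 hw.1, lt_of_lt_of_le hw.2 hy.2⟩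
    exact (((iDW_hasDerivAt h3 (by norm_num) hwI).sub_const _).mul_const _).sub
      (((iDW_hasDerivAt h4 (by norm_num) hwI).sub_const _).mul_const _)
  have hΦu : Φf u = 0 := by simp [hΦdef]
  have hΦval : ∀ w ∈ Ioo u y,
      A2 * ((w-x)^2 - (w-u)^2) / 2 ≤
          iDW 3 φ3 w * (iDW 2 φ4 x - iDW 2 φ4 u) - iDW 3 φ4 w * (iDW 2 φ3 x - iDW 2 φ3 u) ∧
        iDW 3 φ3 w * (iDW 2 φ4 x - iDW 2 φ4 u) - iDW 3 φ4 w * (iDW 2 φ3 x - iDW 2 φ3 u) ≤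
          A3 * ((w-x)^2 - (w-u)^2) / 2 := by
    intro w hw
    have hwI : w ∈ Icc (1/2 : ℝ) 1 := hIsub (Ioo_subset_Icc_self hw)
    exact lemC1 h3 h4 hK hu hwI hx hxu (le_of_lt hw.1)
  have hpolyd : ∀ c : ℝ, ∀ w : ℝ,
      HasDerivAt (fun w => c * ((w-x)^3 - (w-u)^3) / 6) (c * ((w-x)^2 - (w-u)^2) / 2) w := by
    intro c w
    have h1 : HasDerivAt (fun w : ℝ => (w - x)^3) (3 * (w - x)^2 * 1) w := by
      have := HasDerivAt.pow ((hasDerivAt_id w).sub_const x) 3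
      exact this.congr_deriv (by norm_num)
    have h2 : HasDerivAt (fun w : ℝ => (w - u)^3) (3 * (w - u)^2 * 1) w := by
      have := HasDerivAt.pow ((hasDerivAt_id w).sub_const u) 3
      exact this.congr_deriv (by norm_num)
    have := (HasDerivAt.const_mul c (h1.sub h2)).div_const 6
    refine this.congr_deriv ?_
    ring
  have hpolyc : ∀ c : ℝ, ContinuousOn (fun w : ℝ => c * ((w-x)^3 - (w-u)^3) / 6) (Icc u y) := by
    intro c
    apply Continuous.continuousOn
    continuity
  constructor
  · have := deriv_le_deriv_sandwich huy
      (f := fun w => A2 * ((w-x)^3 - (w-u)^3) / 6) (g := Φf)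
      (f' := fun w => A2 * ((w-x)^2 - (w-u)^2) / 2)
      (g' := fun w => iDW 3 φ3 w * (iDW 2 φ4 x - iDW 2 φ4 u)
        - iDW 3 φ4 w * (iDW 2 φ3 x - iDW 2 φ3 u))
      (hpolyc A2) hΦc (fun w _ => hpolyd A2 w) hΦd
      (fun w hw => (hΦval w hw).1)
    rw [hΦu] at this
    simp only [hΦdef] at this
    nlinarith [this]
  · have := deriv_le_deriv_sandwich huy
      (f := Φf) (g := fun w => A3 * ((w-x)^3 - (w-u)^3) / 6)
      (f' := fun w => iDW 3 φ3 w * (iDW 2 φ4 x - iDW 2 φ4 u)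
        - iDW 3 φ4 w * (iDW 2 φ3 x - iDW 2 φ3 u))
      (g' := fun w => A3 * ((w-x)^2 - (w-u)^2) / 2)
      hΦc (hpolyc A3) hΦd (fun w _ => hpolyd A3 w)
      (fun w hw => (hΦval w hw).2)
    rw [hΦu] at this
    simp only [hΦdef] at this
    nlinarith [this]


/-- Main estimate in the case where `K` is positive on the square. -/
lemma mainLem (h3 : ContDiffOn ℝ 4 φ3 (Icc (1/2 : ℝ) 1)) (h4 : ContDiffOn ℝ 4 φ4 (Icc (1/2 : ℝ) 1))
    (hK : ∀ x ∈ Icc (1/2 : ℝ) 1, ∀ y ∈ Icc (1/2 : ℝ) 1,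
      A2 ≤ iDW 3 φ3 x * iDW 4 φ4 y - iDW 4 φ3 x * iDW 3 φ4 y ∧
        iDW 3 φ3 x * iDW 4 φ4 y - iDW 4 φ3 x * iDW 3 φ4 y ≤ A3)
    {t s : ℝ} (ht : t ∈ Icc (1/2 : ℝ) 1) (hs : s ∈ Icc (1/2 : ℝ) 1) (hst : s ≤ t) :
    A2 * (t - s)^4 / 6 ≤ -(Dmat φ3 φ4 t s) ∧ -(Dmat φ3 φ4 t s) ≤ A3 * (t - s)^4 / 6 := by
  have hIsub : Icc s t ⊆ Icc (1/2 : ℝ) 1 := Icc_subset_Icc hs.1 ht.2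
  set Θ : ℝ → ℝ := fun w =>
    2*(w-t) * (iDW 2 φ3 t * iDW 2 φ4 s - iDW 2 φ4 t * iDW 2 φ3 s)
      - (iDW 1 φ3 w - iDW 1 φ3 t) * (2 * iDW 2 φ4 s - 2 * iDW 2 φ4 t)
      + (iDW 1 φ4 w - iDW 1 φ4 t) * (2 * iDW 2 φ3 s - 2 * iDW 2 φ3 t) with hΘdef
  have hD : Dmat φ3 φ4 t s = Θ s := by
    rw [hΘdef]
    rw [Dmat, detfour]
    ring
  have hΘt : Θ t = 0 := by simp [hΘdef]
  have hΘc : ContinuousOn Θ (Icc s t) := by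
    apply ContinuousOn.add
    apply ContinuousOn.sub
    · exact (Continuous.continuousOn (by continuity)).mul continuousOn_const
    · exact (((iDW_continuousOn h3 (n := 1) (by norm_num)).mono hIsub).sub
        continuousOn_const).mul continuousOn_const
    · exact (((iDW_continuousOn h4 (n := 1) (by norm_num)).mono hIsub).sub
        continuousOn_const).mul continuousOn_const
  have hΘd : ∀ w ∈ Ioo s t,
      HasDerivAt Θ
        (2*((iDW 2 φ3 t - iDW 2 φ3 w) * (iDW 2 φ4 s - iDW 2 φ4 w)
          - (iDW 2 φ4 t - iDW 2 φ4 w) * (iDW 2 φ3 s - iDW 2 φ3 w))) w := by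
    intro w hw
    have hwI : w ∈ Ioo (1/2 : ℝ) 1 := ⟨lt_of_le_of_lt hs.1 hw.1, lt_of_lt_of_le hw.2 ht.2⟩
    have p1 : HasDerivAt (fun w : ℝ =>
        2*(w-t) * (iDW 2 φ3 t * iDW 2 φ4 s - iDW 2 φ4 t * iDW 2 φ3 s))
        ((2*1) * (iDW 2 φ3 t * iDW 2 φ4 s - iDW 2 φ4 t * iDW 2 φ3 s)) w :=
      (HasDerivAt.const_mul 2 ((hasDerivAt_id w).sub_const t)).mul_const _
    have p2 : HasDerivAt (fun w : ℝ =>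
        (iDW 1 φ3 w - iDW 1 φ3 t) * (2 * iDW 2 φ4 s - 2 * iDW 2 φ4 t))
        (iDW 2 φ3 w * (2 * iDW 2 φ4 s - 2 * iDW 2 φ4 t)) w :=
      ((iDW_hasDerivAt h3 (n := 1) (by norm_num) hwI).sub_const _).mul_const _
    have p3 : HasDerivAt (fun w : ℝ =>
        (iDW 1 φ4 w - iDW 1 φ4 t) * (2 * iDW 2 φ3 s - 2 * iDW 2 φ3 t))
        (iDW 2 φ4 w * (2 * iDW 2 φ3 s - 2 * iDW 2 φ3 t)) w :=
      ((iDW_hasDerivAt h4 (n := 1) (by norm_num) hwI).sub_const _).mul_const _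
    have := (p1.sub p2).add p3
    refine this.congr_deriv ?_
    ring
  have hΘval : ∀ w ∈ Ioo s t,
      2 * (A2 * ((t-s)^3 - (t-w)^3 - (w-s)^3) / 6) ≤
          2*((iDW 2 φ3 t - iDW 2 φ3 w) * (iDW 2 φ4 s - iDW 2 φ4 w)
            - (iDW 2 φ4 t - iDW 2 φ4 w) * (iDW 2 φ3 s - iDW 2 φ3 w)) ∧
        2*((iDW 2 φ3 t - iDW 2 φ3 w) * (iDW 2 φ4 s - iDW 2 φ4 w)
            - (iDW 2 φ4 t - iDW 2 φ4 w) * (iDW 2 φ3 s - iDW 2 φ3 w)) ≤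
          2 * (A3 * ((t-s)^3 - (t-w)^3 - (w-s)^3) / 6) := by
    intro w hw
    have hwI : w ∈ Icc (1/2 : ℝ) 1 := hIsub (Ioo_subset_Icc_self hw)
    have := lemC2 h3 h4 hK hwI hs ht (le_of_lt hw.1) (le_of_lt hw.2)
    constructor
    · linarith [this.1]
    · linarith [this.2]
  have hpolyd : ∀ c : ℝ, ∀ w : ℝ,
      HasDerivAt (fun w : ℝ => c * ((t-s)^3 * w + (t-w)^4/4 - (w-s)^4/4) / 3)
        (2 * (c * ((t-s)^3 - (t-w)^3 - (w-s)^3) / 6)) w := by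
    intro c w
    have h1 : HasDerivAt (fun w : ℝ => (t-s)^3 * w) ((t-s)^3 * 1) w :=
      HasDerivAt.const_mul _ (hasDerivAt_id w)
    have h2 : HasDerivAt (fun w : ℝ => (t - w)^4) (4 * (t - w)^3 * (-1)) w :=
      (HasDerivAt.pow ((hasDerivAt_id' w).const_sub t) 4).congr_deriv (by norm_num)
    have h3' : HasDerivAt (fun w : ℝ => (w - s)^4) (4 * (w - s)^3 * 1) w :=
      (HasDerivAt.pow ((hasDerivAt_id' w).sub_const s) 4).congr_deriv (by norm_num)
    have := (HasDerivAt.const_mul c ((h1.add (h2.div_const 4)).sub (h3'.div_const 4))).div_const 3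
    refine this.congr_deriv ?_
    ring
  have hpolyc : ∀ c : ℝ,
      ContinuousOn (fun w : ℝ => c * ((t-s)^3 * w + (t-w)^4/4 - (w-s)^4/4) / 3) (Icc s t) := by
    intro c
    apply Continuous.continuousOn
    fun_prop
  have hval : ∀ c : ℝ,
      (c * ((t-s)^3 * t + (t-t)^4/4 - (t-s)^4/4) / 3)
        - (c * ((t-s)^3 * s + (t-s)^4/4 - (s-s)^4/4) / 3) = c * (t-s)^4 / 6 := by
    intro c; ring
  constructor
  · have := deriv_le_deriv_sandwich hst
      (f := fun w : ℝ => A2 * ((t-s)^3 * w + (t-w)^4/4 - (w-s)^4/4) / 3) (g := Θ)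
      (f' := fun w => 2 * (A2 * ((t-s)^3 - (t-w)^3 - (w-s)^3) / 6))
      (g' := fun w => 2*((iDW 2 φ3 t - iDW 2 φ3 w) * (iDW 2 φ4 s - iDW 2 φ4 w)
          - (iDW 2 φ4 t - iDW 2 φ4 w) * (iDW 2 φ3 s - iDW 2 φ3 w)))
      (hpolyc A2) hΘc (fun w _ => hpolyd A2 w) hΘd (fun w hw => (hΘval w hw).1)
    rw [hΘt, hval A2] at this
    rw [hD]
    linarith
  · have := deriv_le_deriv_sandwich hst
      (f := Θ) (g := fun w : ℝ => A3 * ((t-s)^3 * w + (t-w)^4/4 - (w-s)^4/4) / 3)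
      (f' := fun w => 2*((iDW 2 φ3 t - iDW 2 φ3 w) * (iDW 2 φ4 s - iDW 2 φ4 w)
          - (iDW 2 φ4 t - iDW 2 φ4 w) * (iDW 2 φ3 s - iDW 2 φ3 w)))
      (g' := fun w => 2 * (A3 * ((t-s)^3 - (t-w)^3 - (w-s)^3) / 6))
      hΘc (hpolyc A3) hΘd (fun w _ => hpolyd A3 w) (fun w hw => (hΘval w hw).2)
    rw [hΘt, hval A3] at this
    rw [hD]
    linarith


lemma Dmat_symm (φ3 φ4 : ℝ → ℝ) (t s : ℝ) : Dmat φ3 φ4 t s = Dmat φ3 φ4 s t := by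
  rw [Dmat, Dmat, detfour, detfour]; ring

lemma Dmat_swap (φ3 φ4 : ℝ → ℝ) (t s : ℝ) : Dmat φ4 φ3 t s = -Dmat φ3 φ4 t s := by
  rw [Dmat, Dmat, detfour, detfour]; ring

/-- Absolute-value version of the main estimate, positive-`K` case. -/
lemma mainAbs (hA2 : 0 < A2) (h3 : ContDiffOn ℝ 4 φ3 (Icc (1/2 : ℝ) 1)) (h4 : ContDiffOn ℝ 4 φ4 (Icc (1/2 : ℝ) 1))
    (hK : ∀ x ∈ Icc (1/2 : ℝ) 1, ∀ y ∈ Icc (1/2 : ℝ) 1,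
      A2 ≤ iDW 3 φ3 x * iDW 4 φ4 y - iDW 4 φ3 x * iDW 3 φ4 y ∧
        iDW 3 φ3 x * iDW 4 φ4 y - iDW 4 φ3 x * iDW 3 φ4 y ≤ A3)
    {t s : ℝ} (ht : t ∈ Icc (1/2 : ℝ) 1) (hs : s ∈ Icc (1/2 : ℝ) 1) :
    A2 * (t - s)^4 / 6 ≤ |Dmat φ3 φ4 t s| ∧ |Dmat φ3 φ4 t s| ≤ A3 * (t - s)^4 / 6 := by
  rcases le_total s t with hst | hst
  · obtain ⟨hlo, hhi⟩ := mainLem h3 h4 hK ht hs hst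
    have hpow : (0:ℝ) ≤ (t - s)^4 := by positivity
    have hD0 : Dmat φ3 φ4 t s ≤ 0 := by nlinarith [hlo, mul_nonneg (le_of_lt hA2) hpow]
    rw [abs_of_nonpos hD0]
    exact ⟨hlo, hhi⟩
  · obtain ⟨hlo, hhi⟩ := mainLem h3 h4 hK hs ht hst
    have hsym : Dmat φ3 φ4 t s = Dmat φ3 φ4 s t := Dmat_symm φ3 φ4 t s
    have hpow4 : (t - s)^4 = (s - t)^4 := by ring
    rw [hsym, hpow4]
    have hpow : (0:ℝ) ≤ (s - t)^4 := by positivity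
    have hD0 : Dmat φ3 φ4 s t ≤ 0 := by nlinarith [hlo, mul_nonneg (le_of_lt hA2) hpow]
    rw [abs_of_nonpos hD0]
    exact ⟨hlo, hhi⟩

/-- Sign dichotomy for `K` from condition (2). -/
lemma dichotomy (hA2 : 0 < A2)
    (h3 : ContDiffOn ℝ 4 φ3 (Icc (1/2 : ℝ) 1)) (h4 : ContDiffOn ℝ 4 φ4 (Icc (1/2 : ℝ) 1))
    (hc : Cond2 A2 A3 φ3 φ4) :
    (∀ x ∈ Icc (1/2 : ℝ) 1, ∀ y ∈ Icc (1/2 : ℝ) 1,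
        A2 ≤ iDW 3 φ3 x * iDW 4 φ4 y - iDW 4 φ3 x * iDW 3 φ4 y ∧
          iDW 3 φ3 x * iDW 4 φ4 y - iDW 4 φ3 x * iDW 3 φ4 y ≤ A3) ∨
      (∀ x ∈ Icc (1/2 : ℝ) 1, ∀ y ∈ Icc (1/2 : ℝ) 1,
        A2 ≤ -(iDW 3 φ3 x * iDW 4 φ4 y - iDW 4 φ3 x * iDW 3 φ4 y) ∧
          -(iDW 3 φ3 x * iDW 4 φ4 y - iDW 4 φ3 x * iDW 3 φ4 y) ≤ A3) := by
  by_cases hpos : ∀ x ∈ Icc (1/2 : ℝ) 1, ∀ y ∈ Icc (1/2 : ℝ) 1,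
      0 ≤ iDW 3 φ3 x * iDW 4 φ4 y - iDW 4 φ3 x * iDW 3 φ4 y
  · left
    intro x hx y hy
    have h := hc x hx y hy
    rw [abs_of_nonneg (hpos x hx y hy)] at h
    exact h
  · right
    push_neg at hpos
    obtain ⟨x0, hx0, y0, hy0, hneg⟩ := hpos
    have hKneg : ∀ x ∈ Icc (1/2 : ℝ) 1, ∀ y ∈ Icc (1/2 : ℝ) 1,
        iDW 3 φ3 x * iDW 4 φ4 y - iDW 4 φ3 x * iDW 3 φ4 y < 0 := by
      intro x hx y hy
      by_contra hge
      push_neg at hge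
      set Kp : ℝ × ℝ → ℝ := fun p =>
        iDW 3 φ3 p.1 * iDW 4 φ4 p.2 - iDW 4 φ3 p.1 * iDW 3 φ4 p.2 with hKdef
      have hKc : ContinuousOn Kp ((Icc (1/2:ℝ) 1) ×ˢ (Icc (1/2:ℝ) 1)) := by
        have c1 : ContinuousOn (fun p : ℝ × ℝ => iDW 3 φ3 p.1)
            ((Icc (1/2:ℝ) 1) ×ˢ (Icc (1/2:ℝ) 1)) :=
          (iDW_continuousOn h3 (n := 3) (by norm_num)).comp continuousOn_fst (fun p hp => hp.1)
        have c2 : ContinuousOn (fun p : ℝ × ℝ => iDW 4 φ4 p.2)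
            ((Icc (1/2:ℝ) 1) ×ˢ (Icc (1/2:ℝ) 1)) :=
          (iDW_continuousOn h4 (n := 4) (by norm_num)).comp continuousOn_snd (fun p hp => hp.2)
        have c3 : ContinuousOn (fun p : ℝ × ℝ => iDW 4 φ3 p.1)
            ((Icc (1/2:ℝ) 1) ×ˢ (Icc (1/2:ℝ) 1)) :=
          (iDW_continuousOn h3 (n := 4) (by norm_num)).comp continuousOn_fst (fun p hp => hp.1)
        have c4 : ContinuousOn (fun p : ℝ × ℝ => iDW 3 φ4 p.2)
            ((Icc (1/2:ℝ) 1) ×ˢ (Icc (1/2:ℝ) 1)) :=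
          (iDW_continuousOn h4 (n := 3) (by norm_num)).comp continuousOn_snd (fun p hp => hp.2)
        exact (c1.mul c2).sub (c3.mul c4)
      have hconn : IsPreconnected ((Icc (1/2:ℝ) 1) ×ˢ (Icc (1/2:ℝ) 1)) :=
        ((convex_Icc _ _).prod (convex_Icc _ _)).isPreconnected
      have hIVT := hconn.intermediate_value (a := (x0, y0)) (b := (x, y))
        (Set.mk_mem_prod hx0 hy0) (Set.mk_mem_prod hx hy) hKc
      have h0 : (0:ℝ) ∈ Icc (Kp (x0, y0)) (Kp (x, y)) := ⟨le_of_lt hneg, hge⟩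
      obtain ⟨p, hpmem, hp0⟩ := hIVT h0
      have habs := (hc p.1 hpmem.1 p.2 hpmem.2).1
      rw [show iDW 3 φ3 p.1 * iDW 4 φ4 p.2 - iDW 4 φ3 p.1 * iDW 3 φ4 p.2 = Kp p from rfl,
        hp0] at habs
      simp at habs
      linarith
    intro x hx y hy
    have h := hc x hx y hy
    rw [abs_of_neg (hKneg x hx y hy)] at h
    exact h

end chain


/-- Lemma 18: the Jacobian determinant is comparable to `(t−s)⁴`. -/
theorem statement18 (A2 A3 : ℝ) (hA2 : 0 < A2) (hA3 : 0 < A3) :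
    ∃ c : ℝ, 0 < c ∧ ∃ C : ℝ, 0 < C ∧
      ∀ φ3 φ4 : ℝ → ℝ,
        ContDiffOn ℝ 4 φ3 (Icc (1/2 : ℝ) 1) → ContDiffOn ℝ 4 φ4 (Icc (1/2 : ℝ) 1) →
        Cond2 A2 A3 φ3 φ4 →
        ∀ t ∈ Icc (1/2 : ℝ) 1, ∀ s ∈ Icc (1/2 : ℝ) 1,
          c * (t - s) ^ 4 ≤ |Dmat φ3 φ4 t s| ∧ |Dmat φ3 φ4 t s| ≤ C * (t - s) ^ 4 := by
  refine ⟨A2/6, by positivity, A3/6, by positivity, ?_⟩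
  intro φ3 φ4 h3 h4 hc t ht s hs
  have e2 : A2/6 * (t - s)^4 = A2 * (t - s)^4 / 6 := by ring
  have e3 : A3/6 * (t - s)^4 = A3 * (t - s)^4 / 6 := by ring
  rw [e2, e3]
  rcases dichotomy hA2 h3 h4 hc with hK | hK
  · exact mainAbs hA2 h3 h4 hK ht hs
  · have hK' : ∀ x ∈ Icc (1/2 : ℝ) 1, ∀ y ∈ Icc (1/2 : ℝ) 1,
        A2 ≤ iDW 3 φ4 x * iDW 4 φ3 y - iDW 4 φ4 x * iDW 3 φ3 y ∧
          iDW 3 φ4 x * iDW 4 φ3 y - iDW 4 φ4 x * iDW 3 φ3 y ≤ A3 := by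
      intro x hx y hy
      have h := hK y hy x hx
      constructor
      · linarith [h.1, mul_comm (iDW 3 φ4 x) (iDW 4 φ3 y), mul_comm (iDW 4 φ4 x) (iDW 3 φ3 y)]
      · linarith [h.2, mul_comm (iDW 3 φ4 x) (iDW 4 φ3 y), mul_comm (iDW 4 φ4 x) (iDW 3 φ3 y)]
    have := mainAbs hA2 h4 h3 hK' ht hs
    rwa [Dmat_swap φ3 φ4 t s, abs_neg] at this
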